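/- Let F be a finite field, K and M natural numbers with M ≤ K, and ω : Fin K → F an injective map. Let Ω be a finite probability space and X : Ω → (Fin K → F) a random variable whose distribution is the uniform distribution on Fin K → F. Define A : Ω → (Fin (K − M) → F) by A ω' = (i ↦ Σ_{j : Fin K} (ω j)^i · (X ω' j)). Then the distribution of A is the uniform distribution on Fin (K − M) → F, and consequently H[A] = (K − M) · log |F|. -/

import Mathlib

open Finset Real

/-- Probability of an event under a pmf `p` on a finite sample space. -/
noncomputable def probOf {Ω : Type*} [Fintype Ω] (p : Ω → ℝ) (E : Set Ω) : ℝ :=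
  ∑ ω : Ω, E.indicator p ω

/-- Distribution (pmf) of a random variable `X` under `p`. -/
noncomputable def distOf {Ω F : Type*} [Fintype Ω] (p : Ω → ℝ) (X : Ω → F) (y : F) : ℝ :=
  probOf p {ω | X ω = y}

/-- Shannon entropy (natural logarithm) of a random variable on a finite probability space. -/
noncomputable def Hent {Ω F : Type*} [Fintype Ω] [Fintype F] (p : Ω → ℝ) (X : Ω → F) : ℝ :=
  -∑ y : F, distOf p X y * Real.log (distOf p X y)

lemma distOf_comp {Ω F G : Type*} [Fintype Ω] [Fintype F] [DecidableEq G] (p : Ω → ℝ)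
    (X : Ω → F) (T : F → G) (b : G) :
    distOf p (fun ω' => T (X ω')) b = ∑ x : F, if T x = b then distOf p X x else 0 := by
  classical
  simp only [distOf, probOf, Set.indicator_apply, Set.mem_setOf_eq]
  calc (∑ ω' : Ω, if T (X ω') = b then p ω' else 0)
      = ∑ ω' : Ω, ∑ x : F, if X ω' = x then (if T x = b then p ω' else 0) else 0 := by
        refine Finset.sum_congr rfl fun ω' _ => ?_
        rw [Finset.sum_ite_eq]; simp
    _ = ∑ x : F, ∑ ω' : Ω, if X ω' = x then (if T x = b then p ω' else 0) else 0 :=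
        Finset.sum_comm
    _ = ∑ x : F, if T x = b then (∑ ω' : Ω, if X ω' = x then p ω' else 0) else 0 := by
        refine Finset.sum_congr rfl fun x _ => ?_
        by_cases h : T x = b <;> simp [h]

/-- The answer of the GRS Code protocol (the `K - M` Vandermonde syndromes of a uniformly
distributed message vector) is uniformly distributed, hence has entropy `(K - M) log |F|`. -/
theorem stmt_9 {Ω F : Type*} [Fintype Ω] [Field F] [Fintype F] [DecidableEq F]
    {K M : ℕ} (hMK : M ≤ K)
    (ω : Fin K → F) (hω : Function.Injective ω)
    (p : Ω → ℝ) (hp : ∀ ω', 0 ≤ p ω') (hp1 : ∑ ω', p ω' = 1)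
    (X : Ω → (Fin K → F))
    -- the message vector is uniformly distributed on `Fin K → F`
    (hX : ∀ x : Fin K → F, distOf p X x = ((Fintype.card F : ℝ) ^ K)⁻¹) :
    (∀ b : Fin (K - M) → F,
      distOf p (fun ω' => fun i : Fin (K - M) => ∑ j : Fin K, ω j ^ (i : ℕ) * X ω' j) b
        = ((Fintype.card F : ℝ) ^ (K - M))⁻¹) ∧
    Hent p (fun ω' => fun i : Fin (K - M) => ∑ j : Fin K, ω j ^ (i : ℕ) * X ω' j)
      = ((K - M : ℕ) : ℝ) * Real.log (Fintype.card F) := by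
  classical
  set cF : ℕ := Fintype.card F with hcF
  have hcFpos : 0 < cF := Fintype.card_pos
  -- the syndrome map
  set T : (Fin K → F) → (Fin (K - M) → F) :=
    fun x => fun i => ∑ j : Fin K, ω j ^ (i : ℕ) * x j with hT
  have hTadd : ∀ x y, T (x + y) = T x + T y := by
    intro x y; funext i
    simp [hT, mul_add, Finset.sum_add_distrib]
  have hTsub : ∀ x y, T (x - y) = T x - T y := by
    intro x y; funext i
    simp [hT, mul_sub, Finset.sum_sub_distrib]
  -- T is surjective via an invertible Vandermonde submatrix
  have hTsurj : Function.Surjective T := by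
    intro c
    set v : Fin (K - M) → F := fun j => ω (Fin.castLE (Nat.sub_le K M) j) with hv
    have hvinj : Function.Injective v := fun a b h => by
      have := hω h
      exact Fin.castLE_injective _ this
    have hdet : IsUnit (Matrix.vandermonde v).transpose := by
      rw [Matrix.isUnit_iff_isUnit_det, Matrix.det_transpose]
      exact (Matrix.det_vandermonde_ne_zero_iff.mpr hvinj).isUnit
    obtain ⟨y, hy⟩ := Matrix.mulVec_surjective_iff_isUnit.mpr hdet c
    refine ⟨fun j => if h : (j : ℕ) < K - M then y ⟨j, h⟩ else 0, ?_⟩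
    funext i
    have : ∑ j : Fin K, ω j ^ (i : ℕ) *
        (if h : (j : ℕ) < K - M then y ⟨j, h⟩ else 0)
        = ∑ j' : Fin (K - M), v j' ^ (i : ℕ) * y j' := by
      have hzero : ∀ j ∈ Finset.univ, j ∉ Finset.univ.map (Fin.castLEEmb (Nat.sub_le K M)) →
          ω j ^ (i : ℕ) * (if h : (j : ℕ) < K - M then y ⟨j, h⟩ else 0) = 0 := by
        intro j _ hj
        have hnot : ¬ ((j : ℕ) < K - M) := fun h => hj (Finset.mem_map.mpr
          ⟨⟨(j : ℕ), h⟩, Finset.mem_univ _, Fin.ext (by simp [Fin.castLEEmb])⟩)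
        simp [hnot]
      rw [← Finset.sum_subset (Finset.subset_univ _) hzero, Finset.sum_map]
      refine Finset.sum_congr rfl fun j' _ => ?_
      simp [hv, Fin.castLEEmb, Fin.is_lt]
    rw [hT]
    simp only []
    rw [this]
    have := congrFun hy i
    simpa [Matrix.mulVec, dotProduct, Matrix.vandermonde, mul_comm] using this
  -- fiber counting
  have hfiber_card : ∀ b : Fin (K - M) → F,
      (Finset.univ.filter (fun x : Fin K → F => T x = b)).card
        = (Finset.univ.filter (fun x : Fin K → F => T x = 0)).card := by
    intro b
    obtain ⟨x₀, hx₀⟩ := hTsurj b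
    apply Finset.card_bij (fun x _ => x - x₀)
    · intro x hx
      simp only [Finset.mem_filter, Finset.mem_univ, true_and] at hx ⊢
      rw [hTsub, hx, hx₀, sub_self]
    · intro a ha b' hb' h
      exact sub_left_injective h
    · intro z hz
      simp only [Finset.mem_filter, Finset.mem_univ, true_and] at hz
      refine ⟨z + x₀, ?_, by abel⟩
      simp only [Finset.mem_filter, Finset.mem_univ, true_and]
      rw [hTadd, hz, hx₀, zero_add]
  have hsum : ∑ b : Fin (K - M) → F,
      (Finset.univ.filter (fun x : Fin K → F => T x = b)).card
        = cF ^ K := by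
    rw [← Finset.card_eq_sum_card_fiberwise (f := T) (s := Finset.univ)
      (t := Finset.univ) (fun x _ => Finset.mem_univ _)]
    simp [Fintype.card_fun, hcF]
  have hcard_pi : Fintype.card (Fin (K - M) → F) = cF ^ (K - M) := by
    simp [Fintype.card_fun, hcF]
  have hN0 : (Finset.univ.filter (fun x : Fin K → F => T x = 0)).card = cF ^ M := by
    have h1 : cF ^ (K - M) * (Finset.univ.filter (fun x : Fin K → F => T x = 0)).card
        = cF ^ K := by
      rw [← hsum]
      rw [Finset.sum_congr rfl (fun b _ => hfiber_card b)]
      simp [hcard_pi, mul_comm]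
    have h2 : cF ^ K = cF ^ (K - M) * cF ^ M := by
      rw [← pow_add]; congr 1; omega
    have := h1.trans h2
    exact Nat.eq_of_mul_eq_mul_left (by positivity) this
  have hNb : ∀ b, (Finset.univ.filter (fun x : Fin K → F => T x = b)).card = cF ^ M :=
    fun b => (hfiber_card b).trans hN0
  -- uniformity of the answer distribution
  have hunif : ∀ b : Fin (K - M) → F,
      distOf p (fun ω' => T (X ω')) b = ((cF : ℝ) ^ (K - M))⁻¹ := by
    intro b
    rw [distOf_comp]
    have : ∑ x : Fin K → F, (if T x = b then distOf p X x else 0)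
        = ∑ x : Fin K → F, (if T x = b then ((cF : ℝ) ^ K)⁻¹ else 0) := by
      refine Finset.sum_congr rfl fun x _ => ?_
      by_cases h : T x = b <;> simp [h, hX x]
    rw [this, ← Finset.sum_filter]
    simp only [Finset.sum_const, nsmul_eq_mul, hNb b, Nat.cast_pow]
    have hcne : (cF : ℝ) ≠ 0 := Nat.cast_ne_zero.mpr hcFpos.ne'
    have h2 : (cF : ℝ) ^ K = (cF : ℝ) ^ (K - M) * (cF : ℝ) ^ M := by
      rw [← pow_add]; congr 1; omega
    rw [h2]
    field_simp
  constructor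
  · exact hunif
  · -- entropy computation
    unfold Hent
    have : ∀ b : Fin (K - M) → F,
        distOf p (fun ω' => fun i : Fin (K - M) => ∑ j : Fin K, ω j ^ (i : ℕ) * X ω' j) b
          * Real.log (distOf p (fun ω' => fun i : Fin (K - M) =>
              ∑ j : Fin K, ω j ^ (i : ℕ) * X ω' j) b)
        = ((cF : ℝ) ^ (K - M))⁻¹ * Real.log (((cF : ℝ) ^ (K - M))⁻¹) := by
      intro b; rw [hunif b]
    rw [Finset.sum_congr rfl (fun b _ => this b)]
    rw [Finset.sum_const, Finset.card_univ, hcard_pi]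
    have hcne : (cF : ℝ) ≠ 0 := Nat.cast_ne_zero.mpr hcFpos.ne'
    rw [Real.log_inv, Real.log_pow]
    simp only [nsmul_eq_mul, Nat.cast_pow]
    rw [← mul_assoc, mul_inv_cancel₀ (by positivity : ((cF : ℝ)) ^ (K - M) ≠ 0)]
    ring
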